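/- The intersection of L1 = {(ab(cab)^n c, a(bc)^n abca) : n ∈ ℕ} and L2 = {((abc)^n, a(bca)^n) : n ∈ ℕ} is the singleton {(abcabc, abcabca)}. -/
import Mathlib


inductive C3 : Type
  | a | b | c
deriving DecidableEq

open C3

/-- `wpow w n` is the n-fold concatenation of the word `w`. -/
def wpow (w : List C3) (n : ℕ) : List C3 := (List.replicate n w).flatten

lemma wpow_len (w : List C3) (n : ℕ) : (wpow w n).length = n * w.length := by
  simp [wpow]

/-- L1 ∩ L2 = {(abcabc, abcabca)} where
L1 = {(ab(cab)^n c, a(bc)^n abca)} and L2 = {((abc)^n, a(bca)^n)}. -/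
theorem L12_intersection :
    {p : List C3 × List C3 | ∃ n : ℕ,
        p = ([a, b] ++ wpow [c, a, b] n ++ [c], [a] ++ wpow [b, c] n ++ [a, b, c, a])} ∩
    {p : List C3 × List C3 | ∃ n : ℕ,
        p = (wpow [a, b, c] n, [a] ++ wpow [b, c, a] n)} =
    {([a, b, c, a, b, c], [a, b, c, a, b, c, a])} := by
  ext p
  simp only [Set.mem_inter_iff, Set.mem_setOf_eq, Set.mem_singleton_iff]
  constructor
  · rintro ⟨⟨n, rfl⟩, ⟨m, h⟩⟩
    rw [Prod.mk.injEq] at h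
    obtain ⟨h1, h2⟩ := h
    have e1 := congrArg List.length h1
    have e2 := congrArg List.length h2
    simp [wpow_len] at e1 e2
    have hn : n = 1 := by omega
    subst hn
    simp [wpow, List.replicate]
  · rintro rfl
    refine ⟨⟨1, ?_⟩, ⟨2, ?_⟩⟩ <;> simp [wpow, List.replicate]
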